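/- If ⟨u,v⟩ = -1/2 for unit covectors u, v, then the triple reset map simplifies to p Γ(u)Γ(v)Γ(u) = p - 2(u+v)(⟨p,u⟩ + ⟨p,v⟩) for every momentum p (interpreting (u+v)c as the covector scaled by the scalar c = ⟨p,u⟩+⟨p,v⟩), and this expression is symmetric in u and v. -/

import Mathlib

open Matrix

noncomputable def kin {n : ℕ} (M : Matrix (Fin n) (Fin n) ℝ)
    (x y : Matrix (Fin 1) (Fin n) ℝ) : ℝ :=
  (x * M⁻¹ * yᵀ) 0 0

noncomputable def Gam {n : ℕ} (M : Matrix (Fin n) (Fin n) ℝ)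
    (u : Matrix (Fin 1) (Fin n) ℝ) : Matrix (Fin n) (Fin n) ℝ :=
  1 - (2 / kin M u u) • (M⁻¹ * uᵀ * u)

lemma kin_sub_left {n : ℕ} (M : Matrix (Fin n) (Fin n) ℝ)
    (x y z : Matrix (Fin 1) (Fin n) ℝ) :
    kin M (x - y) z = kin M x z - kin M y z := by
  simp [kin, Matrix.sub_mul]

lemma kin_smul_left {n : ℕ} (M : Matrix (Fin n) (Fin n) ℝ) (c : ℝ)
    (x z : Matrix (Fin 1) (Fin n) ℝ) :
    kin M (c • x) z = c * kin M x z := by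
  simp [kin, Matrix.smul_mul]

lemma kin_symm {n : ℕ} (M : Matrix (Fin n) (Fin n) ℝ) (hM : M.PosDef)
    (x y : Matrix (Fin 1) (Fin n) ℝ) :
    kin M x y = kin M y x := by
  have hMs : Mᵀ = M := (by simpa using hM.isHermitian : M.IsSymm)
  have h : (x * M⁻¹ * yᵀ)ᵀ = y * M⁻¹ * xᵀ := by
    rw [transpose_mul, transpose_mul, transpose_transpose, transpose_nonsing_inv, hMs,
      Matrix.mul_assoc]
  have : kin M x y = ((x * M⁻¹ * yᵀ)ᵀ) 0 0 := rfl
  rw [this, h]; rfl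

lemma mul_Gam {n : ℕ} (M : Matrix (Fin n) (Fin n) ℝ)
    (w : Matrix (Fin 1) (Fin n) ℝ) (hw : kin M w w = 1)
    (p : Matrix (Fin 1) (Fin n) ℝ) :
    p * Gam M w = p - (2 * kin M p w) • w := by
  have key : p * (M⁻¹ * wᵀ * w) = kin M p w • w := by
    have h : p * (M⁻¹ * wᵀ * w) = (p * M⁻¹ * wᵀ) * w := by
      simp [Matrix.mul_assoc]
    rw [h]
    ext i j
    have hi : i = 0 := Subsingleton.elim i 0
    subst hi
    simp [Matrix.mul_apply, Fin.sum_univ_one, kin, Matrix.smul_apply]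
  unfold Gam
  rw [hw, Matrix.mul_sub, Matrix.mul_one, Matrix.mul_smul, key, smul_smul]
  norm_num

theorem triple_reset_simplifies {n : ℕ}
    (M : Matrix (Fin n) (Fin n) ℝ) (hM : M.PosDef)
    (u v : Matrix (Fin 1) (Fin n) ℝ)
    (huu : kin M u u = 1) (hvv : kin M v v = 1)
    (huv : kin M u v = -(1/2)) :
    ∀ p : Matrix (Fin 1) (Fin n) ℝ,
      p * Gam M u * Gam M v * Gam M u =
        p - (2 * (kin M p u + kin M p v)) • (u + v) ∧
      p * Gam M v * Gam M u * Gam M v =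
        p - (2 * (kin M p u + kin M p v)) • (u + v) := by
  intro p
  have hvu : kin M v u = -(1/2) := by rw [kin_symm M hM v u, huv]
  constructor
  · rw [mul_Gam M u huu p, mul_Gam M v hvv, mul_Gam M u huu]
    simp only [kin_sub_left, kin_smul_left, huu, hvv, huv, hvu]
    module
  · rw [mul_Gam M v hvv p, mul_Gam M u huu, mul_Gam M v hvv]
    simp only [kin_sub_left, kin_smul_left, huu, hvv, huv, hvu]
    module
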